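/- Let m ∈ ℝ^{(k-1)×k} have ζ-separated rows (each row has pairwise entry differences at least ζ in absolute value) with all entries in [0,1]. Then for every g ∈ ℝ^{k-1}, with h = H(g) ∈ ℝ^{2^{k-1}} the vector with entries ∏_{i∈S} g_i, we have ‖h^T · H(m)‖₂ ≥ (ζ/(2√5))^{k-1} · ‖h‖₂. -/

import Mathlib

open Matrix Finset

/-- Euclidean norm of a finitely-indexed real vector. -/
noncomputable def e2 {n : Type*} [Fintype n] (x : n → ℝ) : ℝ :=
  Real.sqrt (∑ i, x i ^ 2)

/-- The `j`-th largest singular value of a real matrix, via the Courant–Fischer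
max–min characterization: the supremum over `j`-dimensional subspaces of the
infimum of `‖A x‖₂` over unit vectors `x` in the subspace. -/
noncomputable def sval {m' n : Type*} [Fintype m'] [Fintype n] (A : Matrix m' n ℝ) (j : ℕ) : ℝ :=
  ⨆ V : {V : Submodule ℝ (n → ℝ) // Module.finrank ℝ V = j},
    ⨅ x : {x : n → ℝ // x ∈ V.1 ∧ e2 x = 1}, e2 (A.mulVec x.1)

/-- Hadamard extension: rows indexed by subsets `S ⊆ [n]`, entry `(S, j)` equal
to `∏ i ∈ S, m i j`. -/
noncomputable def hadamardExt {n k : ℕ} (m : Matrix (Fin n) (Fin k) ℝ) :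
    Matrix (Finset (Fin n)) (Fin k) ℝ :=
  Matrix.of fun S j => ∏ i ∈ S, m i j

/-- The `L₂ → L₂` operator norm of a real matrix. -/
noncomputable def opN {m' n : Type*} [Fintype m'] [Fintype n] (A : Matrix m' n ℝ) : ℝ :=
  ⨆ x : {x : n → ℝ // e2 x = 1}, e2 (A.mulVec x.1)

/-- for ζ-separated m with entries in [0,1] and any g,
‖hᵀ·H(m)‖₂ ≥ (ζ/(2√5))^{k-1}·‖h‖₂ where h = H(g). -/
lemma key (ζ g x y : ℝ) (hζ : 0 < ζ) (hζ1 : ζ ≤ 1)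
    (hx : 0 ≤ x) (hx1 : x ≤ 1) (hy : 0 ≤ y) (hy1 : y ≤ 1)
    (hsep : ζ^2 ≤ (x-y)^2)
    (h1 : (1+g*x)^2 < ζ^2/20*(1+g^2)) (h2 : (1+g*y)^2 < ζ^2/20*(1+g^2)) : False := by
  have hg2 : g^2 < 1/4 := by
    have h3 : g^2*ζ^2 ≤ g^2*(x-y)^2 := mul_le_mul_of_nonneg_left hsep (sq_nonneg g)
    nlinarith [sq_nonneg ((1+g*x)+(1+g*y)), mul_pos hζ hζ, sq_nonneg g]
  nlinarith [mul_nonneg (mul_self_nonneg g) (sub_nonneg.2 hx1), sq_nonneg (g*(1-x)),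
    sq_nonneg (2*g+1), mul_nonneg hx (sq_nonneg g)]

lemma sum_prod_eq {n : ℕ} (f : Fin n → ℝ) :
    ∑ S : Finset (Fin n), ∏ i ∈ S, f i = ∏ i, (1 + f i) := by
  rw [show (fun i => 1 + f i) = (fun i => f i + 1) from by funext; ring]
  rw [Finset.prod_add]
  simp [Finset.powerset_univ]

theorem stmt2 (k : ℕ) (hk : 1 ≤ k) (ζ : ℝ) (hζ : 0 < ζ)
    (m : Matrix (Fin (k - 1)) (Fin k) ℝ)
    (hm : ∀ i j, m i j ∈ Set.Icc (0 : ℝ) 1)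
    (hsep : ∀ i, ∀ j j' : Fin k, j ≠ j' → ζ ≤ |m i j - m i j'|)
    (g : Fin (k - 1) → ℝ) :
    (ζ / (2 * Real.sqrt 5)) ^ (k - 1) * e2 (fun S : Finset (Fin (k - 1)) => ∏ i ∈ S, g i)
      ≤ e2 (Matrix.vecMul (fun S : Finset (Fin (k - 1)) => ∏ i ∈ S, g i) (hadamardExt m)) := by
  set c : ℝ := ζ / (2 * Real.sqrt 5) with hc
  have h5 : (0:ℝ) < Real.sqrt 5 := Real.sqrt_pos.2 (by norm_num)
  have hcpos : 0 < c := div_pos hζ (by positivity)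
  have hcsq : c ^ 2 = ζ ^ 2 / 20 := by
    rw [hc, div_pow, mul_pow, Real.sq_sqrt (by norm_num : (5:ℝ) ≥ 0)]
    norm_num
  -- entry formula
  have hentry : ∀ j, Matrix.vecMul (fun S : Finset (Fin (k - 1)) => ∏ i ∈ S, g i)
      (hadamardExt m) j = ∏ i, (1 + g i * m i j) := by
    intro j
    have : ∀ S : Finset (Fin (k-1)), (∏ i ∈ S, g i) * (∏ i ∈ S, m i j)
        = ∏ i ∈ S, (g i * m i j) := fun S => (Finset.prod_mul_distrib).symm
    simp only [Matrix.vecMul, dotProduct, hadamardExt, Matrix.of_apply]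
    rw [Finset.sum_congr rfl (fun S _ => this S), sum_prod_eq]
  -- norm of h squared
  have hnorm : ∑ S : Finset (Fin (k-1)), (∏ i ∈ S, g i) ^ 2 = ∏ i, (1 + (g i)^2) := by
    have : ∀ S : Finset (Fin (k-1)), (∏ i ∈ S, g i) ^ 2 = ∏ i ∈ S, (g i)^2 :=
      fun S => (Finset.prod_pow _ _ _).symm
    rw [Finset.sum_congr rfl (fun S _ => this S), sum_prod_eq]
  -- bad sets
  set B : Finset (Fin k) := Finset.univ.biUnion (fun i : Fin (k-1) =>
    Finset.univ.filter (fun j => (1 + g i * m i j)^2 < c^2 * (1 + (g i)^2))) with hB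
  have hcard : B.card ≤ k - 1 := by
    calc B.card ≤ ∑ i : Fin (k-1), (Finset.univ.filter
        (fun j => (1 + g i * m i j)^2 < c^2 * (1 + (g i)^2))).card :=
          Finset.card_biUnion_le
    _ ≤ ∑ _i : Fin (k-1), 1 := by
        apply Finset.sum_le_sum
        intro i _
        apply Finset.card_le_one.2
        intro j hj j' hj'
        by_contra hne
        simp only [Finset.mem_filter] at hj hj'
        have hζ1 : ζ ≤ 1 := by
          have := hsep i j j' hne
          have h1 := (hm i j).1; have h2 := (hm i j).2
          have h3 := (hm i j').1; have h4 := (hm i j').2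
          have : |m i j - m i j'| ≤ 1 := abs_sub_le_iff.2 ⟨by linarith, by linarith⟩
          linarith [hsep i j j' hne]
        have hs2 : ζ^2 ≤ (m i j - m i j')^2 := by
          have h := hsep i j j' hne
          calc ζ^2 ≤ |m i j - m i j'|^2 := by
                apply pow_le_pow_left₀ hζ.le h
          _ = (m i j - m i j')^2 := sq_abs _
        exact key ζ (g i) (m i j) (m i j') hζ hζ1 (hm i j).1 (hm i j).2
          (hm i j').1 (hm i j').2 hs2 (by rw [← hcsq]; exact hj.2) (by rw [← hcsq]; exact hj'.2)
    _ = k - 1 := by simp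
  have hlt : B.card < Fintype.card (Fin k) := by
    rw [Fintype.card_fin]; omega
  obtain ⟨j, hj⟩ : ∃ j : Fin k, j ∉ B := by
    by_contra h
    push_neg at h
    have : (Finset.univ : Finset (Fin k)) ⊆ B := fun x _ => h x
    have := Finset.card_le_card this
    simp [Finset.card_univ] at this
    omega
  -- j is good: for all i, c^2*(1+g i^2) ≤ (1+g i * m i j)^2
  have hgood : ∀ i, c^2 * (1 + (g i)^2) ≤ (1 + g i * m i j)^2 := by
    intro i
    by_contra h
    push_neg at h
    exact hj (Finset.mem_biUnion.2 ⟨i, Finset.mem_univ _,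
      Finset.mem_filter.2 ⟨Finset.mem_univ _, h⟩⟩)
  -- main chain on squares
  have hmain : (c ^ (k-1))^2 * ∑ S : Finset (Fin (k-1)), (∏ i ∈ S, g i) ^ 2
      ≤ ∑ j', (Matrix.vecMul (fun S : Finset (Fin (k - 1)) => ∏ i ∈ S, g i)
          (hadamardExt m) j') ^ 2 := by
    rw [hnorm]
    calc (c ^ (k-1))^2 * ∏ i, (1 + (g i)^2)
        = ∏ i : Fin (k-1), (c^2 * (1 + (g i)^2)) := by
          rw [Finset.prod_mul_distrib, Finset.prod_const, ← pow_mul, ← pow_mul,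
            Finset.card_univ, Fintype.card_fin, Nat.mul_comm]
    _ ≤ ∏ i : Fin (k-1), (1 + g i * m i j)^2 := by
          apply Finset.prod_le_prod
          · intro i _; positivity
          · intro i _; exact hgood i
    _ = (∏ i : Fin (k-1), (1 + g i * m i j))^2 := Finset.prod_pow _ _ _
    _ = (Matrix.vecMul (fun S : Finset (Fin (k - 1)) => ∏ i ∈ S, g i)
          (hadamardExt m) j) ^ 2 := by rw [hentry]
    _ ≤ _ := Finset.single_le_sum
          (f := fun j' => (Matrix.vecMul (fun S : Finset (Fin (k - 1)) => ∏ i ∈ S, g i)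
            (hadamardExt m) j') ^ 2) (fun j' _ => sq_nonneg _) (Finset.mem_univ j)
  -- conclude with sqrt
  unfold e2
  calc c ^ (k-1) * Real.sqrt (∑ S : Finset (Fin (k-1)), (∏ i ∈ S, g i) ^ 2)
      = Real.sqrt ((c ^ (k-1))^2 * ∑ S : Finset (Fin (k-1)), (∏ i ∈ S, g i) ^ 2) := by
        rw [Real.sqrt_mul (sq_nonneg _), Real.sqrt_sq (by positivity)]
  _ ≤ _ := Real.sqrt_le_sqrt hmain
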